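/- arXiv:1204.0549 — 2 statements merged into one kernel-verified Lean document; each statement's English description precedes it below -/
import Mathlib

section
/- Let (Ω, F, P) be a probability space with a filtration (F_L)_{L∈ℕ}, let ε > 0, and let V_1, ..., V_n be random variables measurable with respect to F_∞ = ∨_L F_L, with ε ≤ V_i ≤ 1 almost surely for each i. Let r_1, ..., r_n > 0 be constants. For m ∈ ℕ set L(m) = ⌊√m⌋; define m_i(m) = max{ L(m), ⌊ m·√(E[V_i|F_{L(m)}]) / ∑_{j=1}^n √(E[V_j|F_{L(m)}]) ⌋ } for i = 1, ..., n−1, and m_n(m) = m − ∑_{i=1}^{n−1} m_i(m); and set U_i = E[V_i | F_m]. Then for all i ≠ j, lim_{m→∞} E[ ((m_i(m)+r_i)√U_j − (m_j(m)+r_j)√U_i)² / ((m_i(m)+r_i)(m_j(m)+r_j)) ] = 0. -/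
open MeasureTheory ProbabilityTheory Filter Finset

lemma aux_sqrt_tendsto : Tendsto Real.sqrt atTop atTop := by
  apply tendsto_atTop_atTop.2
  intro b
  exact ⟨max 0 (b^2), fun a ha => by
    calc b ≤ |b| := le_abs_self b
    _ = Real.sqrt (b^2) := (Real.sqrt_sq_eq_abs b).symm
    _ ≤ Real.sqrt a := Real.sqrt_le_sqrt (le_trans (le_max_right _ _) ha)⟩

lemma aux_natsqrt_atTop : Tendsto (fun m : ℕ => Nat.sqrt m) atTop atTop := by
  apply tendsto_atTop_atTop.2
  intro b
  exact ⟨b^2, fun m hm => by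
    calc b = Nat.sqrt (b^2) := (Nat.sqrt_eq' b).symm
    _ ≤ Nat.sqrt m := Nat.sqrt_le_sqrt hm⟩

lemma aux_natsqrt_le_sqrt (m : ℕ) : (Nat.sqrt m : ℝ) ≤ Real.sqrt m :=
  Real.le_sqrt_of_sq_le (by exact_mod_cast (by simpa [pow_two] using Nat.sqrt_le' m : Nat.sqrt m ^ 2 ≤ m))

lemma aux_natsqrt_div_tendsto : Tendsto (fun m : ℕ => (Nat.sqrt m : ℝ) / m) atTop (nhds 0) := by
  have h1 : Tendsto (fun m : ℕ => 1 / Real.sqrt m) atTop (nhds 0) := by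
    apply Tendsto.comp (tendsto_inv_atTop_zero.comp aux_sqrt_tendsto) tendsto_natCast_atTop_atTop
      |>.congr (fun m => by simp [one_div])
  apply tendsto_of_tendsto_of_tendsto_of_le_of_le' tendsto_const_nhds h1
  · filter_upwards [eventually_ge_atTop 1] with m hm
    positivity
  · filter_upwards [eventually_ge_atTop 1] with m hm
    have hm0 : (0:ℝ) < m := by exact_mod_cast hm
    calc (Nat.sqrt m : ℝ) / m ≤ Real.sqrt m / m := by
          gcongr; exact aux_natsqrt_le_sqrt m
    _ = 1 / Real.sqrt m := Real.sqrt_div_self'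

lemma aux_floor_div_tendsto (g : ℕ → ℝ) (G : ℝ) (hg : Tendsto g atTop (nhds G)) :
    Tendsto (fun m : ℕ => (⌊(m:ℝ) * g m⌋ : ℝ) / m) atTop (nhds G) := by
  have hlow : Tendsto (fun m : ℕ => g m - 1/m) atTop (nhds G) := by
    simpa using hg.sub (tendsto_one_div_atTop_nhds_zero_nat)
  apply tendsto_of_tendsto_of_tendsto_of_le_of_le' hlow hg
  · filter_upwards [eventually_ge_atTop 1] with m hm
    have hm0 : (0:ℝ) < m := by exact_mod_cast hm
    rw [sub_le_iff_le_add, ← add_div, le_div_iff₀ hm0]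
    calc g m * m = (m:ℝ) * g m := mul_comm _ _
    _ ≤ ⌊(m:ℝ) * g m⌋ + 1 := (Int.lt_floor_add_one _).le
  · filter_upwards [eventually_ge_atTop 1] with m hm
    have hm0 : (0:ℝ) < m := by exact_mod_cast hm
    rw [div_le_iff₀ hm0]
    calc (⌊(m:ℝ) * g m⌋ : ℝ) ≤ (m:ℝ) * g m := Int.floor_le _
    _ = g m * m := mul_comm _ _

lemma aux_pointwise (a b u v : ℕ → ℝ) (A B U W : ℝ) (hA : 0 < A) (hB : 0 < B)
    (ha : Tendsto (fun m => a m / m) atTop (nhds A))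
    (hb : Tendsto (fun m => b m / m) atTop (nhds B))
    (hu : Tendsto u atTop (nhds U)) (hv : Tendsto v atTop (nhds W))
    (hkey : A * Real.sqrt W = B * Real.sqrt U) :
    Tendsto (fun m => (a m * Real.sqrt (v m) - b m * Real.sqrt (u m))^2 / (a m * b m))
      atTop (nhds 0) := by
  have hsu : Tendsto (fun m => Real.sqrt (u m)) atTop (nhds (Real.sqrt U)) :=
    (Real.continuous_sqrt.continuousAt.tendsto).comp hu
  have hsv : Tendsto (fun m => Real.sqrt (v m)) atTop (nhds (Real.sqrt W)) :=
    (Real.continuous_sqrt.continuousAt.tendsto).comp hv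
  have hnum : Tendsto (fun m => ((a m / m) * Real.sqrt (v m) - (b m / m) * Real.sqrt (u m))^2)
      atTop (nhds ((A * Real.sqrt W - B * Real.sqrt U)^2)) :=
    ((ha.mul hsv).sub (hb.mul hsu)).pow 2
  have hden : Tendsto (fun m => (a m / m) * (b m / m)) atTop (nhds (A * B)) := ha.mul hb
  have hfrac := hnum.div hden (by positivity)
  rw [hkey, sub_self] at hfrac
  simp only [ne_eq, zero_pow, OfNat.ofNat_ne_zero, not_false_eq_true, zero_div] at hfrac
  apply hfrac.congr'
  filter_upwards [eventually_ge_atTop 1] with m hm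
  have hm0 : ((m:ℝ))^2 ≠ 0 := by
    have : (0:ℝ) < m := by exact_mod_cast hm
    positivity
  have e1 : (a m / m) * Real.sqrt (v m) - (b m / m) * Real.sqrt (u m)
      = (a m * Real.sqrt (v m) - b m * Real.sqrt (u m)) / m := by ring
  simp only [Pi.div_apply]
  rw [e1, div_pow, show (a m / m) * (b m / m) = (a m * b m) / (m:ℝ)^2 by ring,
    div_div_div_cancel_right₀ hm0]

set_option maxHeartbeats 2000000 in
/-- Identity (p2): the cross terms of the Lagrange-identity expansion of the Bayes risk,
evaluated along the two-stage sequential allocation, vanish in expectation as `m → ∞`. -/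
theorem two_stage_cross_terms_vanish {Ω : Type*} {mΩ : MeasurableSpace Ω} (P : Measure Ω)
    [IsProbabilityMeasure P] (F : ℕ → MeasurableSpace Ω)
    (hFmono : Monotone F) (hFle : ∀ L, F L ≤ mΩ)
    (ε : ℝ) (hε : 0 < ε)
    (n : ℕ) (V : Fin (n + 1) → Ω → ℝ)
    (hVmeas : ∀ i, Measurable[⨆ L, F L] (V i))
    (hV : ∀ i, ∀ᵐ ω ∂P, V i ω ∈ Set.Icc ε 1)
    (r : Fin (n + 1) → ℝ) (hr : ∀ i, 0 < r i)
    (alloc : ℕ → Fin (n + 1) → Ω → ℤ)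
    (hAlloc : ∀ m (ω : Ω) (i : Fin (n + 1)), (i : ℕ) < n →
      alloc m i ω = max (Nat.sqrt m : ℤ)
        ⌊(m : ℝ) * Real.sqrt ((P[V i | F (Nat.sqrt m)]) ω) /
          ∑ j, Real.sqrt ((P[V j | F (Nat.sqrt m)]) ω)⌋)
    (hAllocLast : ∀ m (ω : Ω),
      alloc m (Fin.last n) ω =
        (m : ℤ) - ∑ i ∈ Finset.univ.filter (fun i : Fin (n + 1) => (i : ℕ) < n),
          alloc m i ω) :
    ∀ i j : Fin (n + 1), i ≠ j →
      Tendsto (fun m : ℕ => ∫ ω,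
          (((alloc m i ω : ℝ) + r i) * Real.sqrt ((P[V j | F m]) ω) -
            ((alloc m j ω : ℝ) + r j) * Real.sqrt ((P[V i | F m]) ω)) ^ 2 /
          (((alloc m i ω : ℝ) + r i) * ((alloc m j ω : ℝ) + r j)) ∂P)
        atTop (nhds 0) := by
  intro i j hij
  -- basic setup
  have hε1 : ε ≤ 1 := by
    obtain ⟨ω, hω⟩ := (hV 0).exists
    exact hω.1.trans hω.2
  set ℱ : Filtration ℕ mΩ := ⟨F, hFmono, hFle⟩ with hℱ
  have hVmeas' : ∀ k, Measurable (V k) :=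
    fun k => (hVmeas k).mono (iSup_le hFle) le_rfl
  have hVint : ∀ k, Integrable (V k) P := fun k =>
    (integrable_const (1:ℝ)).mono' (hVmeas' k).aestronglyMeasurable
      ((hV k).mono fun ω h => by
        rw [Real.norm_eq_abs, abs_of_pos (lt_of_lt_of_le hε h.1)]; exact h.2)
  -- conditional expectations lie in [ε, 1]
  have hW : ∀ (L : ℕ) k, ∀ᵐ ω ∂P, (P[V k|F L]) ω ∈ Set.Icc ε 1 := by
    intro L k
    have hle1 : (P[(fun _ => ε)|F L]) ≤ᵐ[P] (P[V k|F L]) :=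
      condExp_mono (integrable_const ε) (hVint k) ((hV k).mono fun ω h => h.1)
    have hle2 : (P[V k|F L]) ≤ᵐ[P] (P[(fun _ => (1:ℝ))|F L]) :=
      condExp_mono (hVint k) (integrable_const 1) ((hV k).mono fun ω h => h.2)
    rw [condExp_const (hFle L) ε] at hle1
    rw [condExp_const (hFle L) (1:ℝ)] at hle2
    filter_upwards [hle1, hle2] with ω l1 l2
    exact ⟨l1, l2⟩
  -- Lévy upward convergence
  have hLevy : ∀ k, ∀ᵐ ω ∂P, Tendsto (fun L => (P[V k|F L]) ω) atTop (nhds (V k ω)) := by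
    intro k
    exact (hVint k).tendsto_ae_condExp (ℱ := ℱ) ((hVmeas k).stronglyMeasurable)
  -- the good set
  have hGood : ∀ᵐ ω ∂P, (∀ k, V k ω ∈ Set.Icc ε 1) ∧
      (∀ k (L : ℕ), (P[V k|F L]) ω ∈ Set.Icc ε 1) ∧
      (∀ k, Tendsto (fun L => (P[V k|F L]) ω) atTop (nhds (V k ω))) :=
    ((ae_all_iff.2 hV).and (((ae_all_iff.2 fun k => ae_all_iff.2 fun L => hW L k)).and
      (ae_all_iff.2 hLevy)))
  -- constants
  set c : ℝ := Real.sqrt ε / ((n:ℝ) + 1) with hc_def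
  have hc : 0 < c := by
    have := Real.sqrt_pos.2 hε
    positivity
  set Rm : ℝ := max (r i) (r j) with hRm_def
  have hRm : 0 < Rm := lt_of_lt_of_le (hr i) (le_max_left _ _)
  set C : ℝ := 16 * (1 + Rm)^2 / c^2 with hC_def
  -- filter set facts
  have hfe : Finset.univ.filter (fun k : Fin (n+1) => (k:ℕ) < n)
      = Finset.univ.erase (Fin.last n) := by
    ext k
    have hk := k.isLt
    simp only [mem_filter, mem_univ, true_and, mem_erase, ne_eq, and_true]
    rw [Fin.ext_iff, Fin.val_last]
    omega
  have hcard : (Finset.univ.filter (fun k : Fin (n+1) => (k:ℕ) < n)).card = n := by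
    rw [hfe, Finset.card_erase_of_mem (mem_univ _)]
    simp
  -- pointwise convergence of allocation ratios on the good set
  have hPt : ∀ ω, (∀ k, V k ω ∈ Set.Icc ε 1) →
      (∀ k, Tendsto (fun L => (P[V k|F L]) ω) atTop (nhds (V k ω))) →
      ∀ k, Tendsto (fun m => (alloc m k ω : ℝ) / m) atTop
        (nhds (Real.sqrt (V k ω) / ∑ l, Real.sqrt (V l ω))) := by
    intro ω hVb hWt
    set S : ℝ := ∑ l, Real.sqrt (V l ω) with hS_def
    have hS : 0 < S := Finset.sum_pos
      (fun l _ => Real.sqrt_pos.2 (lt_of_lt_of_le hε (hVb l).1)) univ_nonempty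
    set f : Fin (n+1) → ℝ := fun k => Real.sqrt (V k ω) / S with hf_def
    have hf_pos : ∀ k, 0 < f k :=
      fun k => div_pos (Real.sqrt_pos.2 (lt_of_lt_of_le hε (hVb k).1)) hS
    have hsum_f : ∑ k, f k = 1 := by
      rw [hf_def, ← Finset.sum_div, div_self hS.ne']
    have hG : ∀ k, Tendsto (fun L : ℕ =>
        Real.sqrt ((P[V k|F L]) ω) / ∑ l, Real.sqrt ((P[V l|F L]) ω))
        atTop (nhds (f k)) := by
      intro k
      have hnum : Tendsto (fun L : ℕ => Real.sqrt ((P[V k|F L]) ω)) atTop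
          (nhds (Real.sqrt (V k ω))) :=
        (Real.continuous_sqrt.continuousAt.tendsto).comp (hWt k)
      have hden : Tendsto (fun L : ℕ => ∑ l, Real.sqrt ((P[V l|F L]) ω)) atTop (nhds S) := by
        rw [hS_def]
        exact tendsto_finset_sum _
          (fun l _ => (Real.continuous_sqrt.continuousAt.tendsto).comp (hWt l))
      exact hnum.div hden hS.ne'
    have hlt : ∀ k : Fin (n+1), (k:ℕ) < n →
        Tendsto (fun m => (alloc m k ω : ℝ) / m) atTop (nhds (f k)) := by
      intro k hk
      have hmax : Tendsto (fun m : ℕ => max ((Nat.sqrt m : ℝ)/m)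
          ((⌊(m:ℝ) * (Real.sqrt ((P[V k|F (Nat.sqrt m)]) ω) /
            ∑ l, Real.sqrt ((P[V l|F (Nat.sqrt m)]) ω))⌋ : ℝ)/m)) atTop
          (nhds (max 0 (f k))) :=
        Tendsto.max aux_natsqrt_div_tendsto
          (aux_floor_div_tendsto _ _ ((hG k).comp aux_natsqrt_atTop))
      rw [max_eq_right (hf_pos k).le] at hmax
      apply hmax.congr'
      filter_upwards [eventually_ge_atTop 1] with m hm
      have hm0 : (0:ℝ) ≤ (m:ℝ)⁻¹ := by positivity
      rw [hAlloc m ω k hk, ← mul_div_assoc]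
      push_cast [Int.cast_max]
      rw [div_eq_mul_inv, div_eq_mul_inv, ← max_mul_of_nonneg _ _ hm0, ← div_eq_mul_inv]
    intro k
    by_cases hk : (k:ℕ) < n
    · exact hlt k hk
    · have hkl : k = Fin.last n := Fin.ext (by have := k.isLt; simp [Fin.val_last]; omega)
      subst hkl
      have hsum_t : Tendsto (fun m => ∑ l ∈ Finset.univ.filter
          (fun l : Fin (n+1) => (l:ℕ) < n), (alloc m l ω : ℝ)/m) atTop
          (nhds (∑ l ∈ Finset.univ.filter (fun l : Fin (n+1) => (l:ℕ) < n), f l)) :=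
        tendsto_finset_sum _ (fun l hl => hlt l (mem_filter.1 hl).2)
      have hval : (1:ℝ) - ∑ l ∈ Finset.univ.filter (fun l : Fin (n+1) => (l:ℕ) < n), f l
          = f (Fin.last n) := by
        rw [hfe, Finset.sum_erase_eq_sub (mem_univ _), hsum_f]
        ring
      have hT := (tendsto_const_nhds (x := (1:ℝ)) (f := atTop)).sub hsum_t
      rw [hval] at hT
      apply hT.congr'
      filter_upwards [eventually_ge_atTop 1] with m hm
      have hm0 : ((m:ℝ)) ≠ 0 := by positivity
      rw [hAllocLast m ω]
      push_cast
      rw [sub_div, div_self hm0, Finset.sum_div]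
  -- deterministic bounds on allocations
  have hBd : ∀ ω, (∀ k (L : ℕ), (P[V k|F L]) ω ∈ Set.Icc ε 1) →
      ∀ m : ℕ, 1 ≤ m → 2 ≤ (m:ℝ) * c → (n:ℝ) * Real.sqrt m ≤ (m:ℝ) * c / 2 →
      ∀ k, (m:ℝ) * c / 2 ≤ (alloc m k ω : ℝ) ∧ (alloc m k ω : ℝ) ≤ m := by
    intro ω hWb m hm1 hm2 hm3
    have hmpos : (0:ℝ) < m := by exact_mod_cast hm1
    set D : ℝ := ∑ l, Real.sqrt ((P[V l|F (Nat.sqrt m)]) ω) with hD_def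
    have hterm : ∀ l, Real.sqrt ε ≤ Real.sqrt ((P[V l|F (Nat.sqrt m)]) ω) :=
      fun l => Real.sqrt_le_sqrt (hWb l (Nat.sqrt m)).1
    have hterm1 : ∀ l, Real.sqrt ((P[V l|F (Nat.sqrt m)]) ω) ≤ 1 :=
      fun l => Real.sqrt_le_one.2 (hWb l (Nat.sqrt m)).2
    have htermpos : ∀ l, 0 < Real.sqrt ((P[V l|F (Nat.sqrt m)]) ω) :=
      fun l => lt_of_lt_of_le (Real.sqrt_pos.2 hε) (hterm l)
    have hD_pos : 0 < D := Finset.sum_pos (fun l _ => htermpos l) univ_nonempty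
    have hD_le : D ≤ (n:ℝ) + 1 := by
      calc D ≤ ∑ _l : Fin (n+1), (1:ℝ) := Finset.sum_le_sum (fun l _ => hterm1 l)
      _ = (n:ℝ) + 1 := by simp
    set g : Fin (n+1) → ℝ := fun l => Real.sqrt ((P[V l|F (Nat.sqrt m)]) ω) / D with hg_def
    have hg_le_one : ∀ l, g l ≤ 1 := fun l => (div_le_one hD_pos).2
      (Finset.single_le_sum (fun l _ => (htermpos l).le) (mem_univ l))
    have hg_ge : ∀ l, c ≤ g l := fun l =>
      div_le_div₀ (Real.sqrt_nonneg _) (hterm l) hD_pos hD_le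
    have hsum_g : ∑ l, g l = 1 := by
      rw [hg_def, ← Finset.sum_div, div_self hD_pos.ne']
    have hb1 : ∀ k : Fin (n+1), (k:ℕ) < n →
        ((m:ℝ)*c/2 ≤ (alloc m k ω : ℝ) ∧ (alloc m k ω:ℝ) ≤ m ∧
          (alloc m k ω:ℝ) ≤ Real.sqrt m + (m:ℝ) * g k) := by
      intro k hk
      have he : (alloc m k ω : ℝ) = max ((Nat.sqrt m : ℝ)) ((⌊(m:ℝ) * g k⌋ : ℝ)) := by
        rw [hAlloc m ω k hk, ← mul_div_assoc]
        push_cast [Int.cast_max]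
        rfl
      have hfl : (m:ℝ) * c - 1 ≤ (⌊(m:ℝ) * g k⌋ : ℝ) := by
        have h1 : (m:ℝ) * g k - 1 < (⌊(m:ℝ) * g k⌋ : ℝ) := Int.sub_one_lt_floor _
        have h2 : (m:ℝ) * c ≤ (m:ℝ) * g k := by
          apply mul_le_mul_of_nonneg_left (hg_ge k) hmpos.le
        linarith
      refine ⟨?_, ?_, ?_⟩
      · rw [he]
        calc (m:ℝ)*c/2 ≤ (m:ℝ)*c - 1 := by linarith
        _ ≤ (⌊(m:ℝ) * g k⌋ : ℝ) := hfl
        _ ≤ _ := le_max_right _ _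
      · rw [he]
        apply max_le
        · exact_mod_cast Nat.cast_le.2 (Nat.sqrt_le_self m)
        · calc ((⌊(m:ℝ) * g k⌋ : ℝ)) ≤ (m:ℝ) * g k := Int.floor_le _
          _ ≤ (m:ℝ) * 1 := mul_le_mul_of_nonneg_left (hg_le_one k) hmpos.le
          _ = m := mul_one _
      · rw [he]
        apply max_le
        · exact le_trans (aux_natsqrt_le_sqrt m) (le_add_of_le_of_nonneg le_rfl
            (by positivity))
        · exact le_trans (Int.floor_le _) (le_add_of_nonneg_left (Real.sqrt_nonneg _))
    intro k
    by_cases hk : (k:ℕ) < n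
    · exact ⟨(hb1 k hk).1, (hb1 k hk).2.1⟩
    · have hkl : k = Fin.last n := Fin.ext (by have := k.isLt; simp [Fin.val_last]; omega)
      subst hkl
      have he : (alloc m (Fin.last n) ω : ℝ) = (m:ℝ) - ∑ l ∈ Finset.univ.filter
          (fun l : Fin (n+1) => (l:ℕ) < n), (alloc m l ω : ℝ) := by
        rw [hAllocLast m ω]
        push_cast
        ring
      constructor
      · rw [he]
        have hsum_le : ∑ l ∈ Finset.univ.filter (fun l : Fin (n+1) => (l:ℕ) < n),
            (alloc m l ω : ℝ) ≤ (n:ℝ) * Real.sqrt m + (m:ℝ) * (1 - g (Fin.last n)) := by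
          calc ∑ l ∈ Finset.univ.filter (fun l : Fin (n+1) => (l:ℕ) < n), (alloc m l ω : ℝ)
              ≤ ∑ l ∈ Finset.univ.filter (fun l : Fin (n+1) => (l:ℕ) < n),
                (Real.sqrt m + (m:ℝ) * g l) :=
            Finset.sum_le_sum (fun l hl => (hb1 l (mem_filter.1 hl).2).2.2)
          _ = (n:ℝ) * Real.sqrt m + (m:ℝ) * ∑ l ∈ Finset.univ.filter
                (fun l : Fin (n+1) => (l:ℕ) < n), g l := by
            rw [Finset.sum_add_distrib, Finset.sum_const, hcard, nsmul_eq_mul, ← Finset.mul_sum]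
          _ = (n:ℝ) * Real.sqrt m + (m:ℝ) * (1 - g (Fin.last n)) := by
            rw [hfe, Finset.sum_erase_eq_sub (mem_univ _), hsum_g]
        have hgl : c ≤ g (Fin.last n) := hg_ge _
        have : (m:ℝ) * g (Fin.last n) ≥ (m:ℝ) * c :=
          mul_le_mul_of_nonneg_left hgl hmpos.le
        nlinarith [hm3]
      · rw [he]
        have hsum_nonneg : 0 ≤ ∑ l ∈ Finset.univ.filter
            (fun l : Fin (n+1) => (l:ℕ) < n), (alloc m l ω : ℝ) :=
          Finset.sum_nonneg (fun l hl => le_trans (by positivity)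
            (hb1 l (mem_filter.1 hl).2).1)
        linarith
  -- measurability
  have hWmeas : ∀ (L : ℕ) k, Measurable ((P[V k|F L])) :=
    fun L k => (stronglyMeasurable_condExp.mono (hFle L)).measurable
  have hAllocMeasZ : ∀ m (k : Fin (n+1)), Measurable (fun ω => alloc m k ω) := by
    intro m k
    have hA : ∀ k : Fin (n+1), (k:ℕ) < n → Measurable (fun ω => alloc m k ω) := by
      intro k hk
      have he : (fun ω => alloc m k ω) = fun ω => max (Nat.sqrt m : ℤ)
          ⌊(m : ℝ) * Real.sqrt ((P[V k | F (Nat.sqrt m)]) ω) /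
            ∑ l, Real.sqrt ((P[V l | F (Nat.sqrt m)]) ω)⌋ := funext fun ω => hAlloc m ω k hk
      rw [he]
      apply Measurable.max measurable_const
      apply Measurable.floor
      apply Measurable.div
      · exact measurable_const.mul (Real.continuous_sqrt.measurable.comp (hWmeas _ k))
      · exact Finset.measurable_sum _
          (fun l _ => Real.continuous_sqrt.measurable.comp (hWmeas _ l))
    by_cases hk : (k:ℕ) < n
    · exact hA k hk
    · have hkl : k = Fin.last n := Fin.ext (by have := k.isLt; simp [Fin.val_last]; omega)
      subst hkl
      have he : (fun ω => alloc m (Fin.last n) ω) = fun ω => (m:ℤ) -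
          ∑ l ∈ Finset.univ.filter (fun l : Fin (n+1) => (l:ℕ) < n), alloc m l ω :=
        funext fun ω => hAllocLast m ω
      rw [he]
      exact measurable_const.sub
        (Finset.measurable_sum _ (fun l hl => hA l (mem_filter.1 hl).2))
  have hAllocMeas : ∀ m (k : Fin (n+1)), Measurable (fun ω => (alloc m k ω : ℝ)) :=
    fun m k => measurable_from_top.comp (hAllocMeasZ m k)
  have hΦmeas : ∀ m : ℕ, AEStronglyMeasurable (fun ω =>
      (((alloc m i ω : ℝ) + r i) * Real.sqrt ((P[V j | F m]) ω) -
        ((alloc m j ω : ℝ) + r j) * Real.sqrt ((P[V i | F m]) ω)) ^ 2 /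
      (((alloc m i ω : ℝ) + r i) * ((alloc m j ω : ℝ) + r j))) P := by
    intro m
    apply Measurable.aestronglyMeasurable
    apply Measurable.div
    · apply Measurable.pow_const
      apply Measurable.sub
      · exact ((hAllocMeas m i).add_const _).mul
          (Real.continuous_sqrt.measurable.comp (hWmeas m j))
      · exact ((hAllocMeas m j).add_const _).mul
          (Real.continuous_sqrt.measurable.comp (hWmeas m i))
    · exact ((hAllocMeas m i).add_const _).mul ((hAllocMeas m j).add_const _)
  -- eventual arithmetic conditions
  have hev1 : ∀ᶠ m : ℕ in atTop, 2 ≤ (m:ℝ) * c :=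
    ((tendsto_natCast_atTop_atTop (R := ℝ)).atTop_mul_const hc).eventually_ge_atTop 2
  have hev2 : ∀ᶠ m : ℕ in atTop, (n:ℝ) * Real.sqrt m ≤ (m:ℝ) * c / 2 := by
    have hs : Tendsto (fun m : ℕ => Real.sqrt m) atTop atTop :=
      aux_sqrt_tendsto.comp (tendsto_natCast_atTop_atTop (R := ℝ))
    filter_upwards [hs.eventually_ge_atTop (2 * (n:ℝ) / c)] with m h1
    have hm0 : (0:ℝ) ≤ m := Nat.cast_nonneg m
    have h2 : 2 * (n:ℝ) ≤ c * Real.sqrt m := by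
      rw [div_le_iff₀ hc] at h1
      linarith
    nlinarith [mul_nonneg (sub_nonneg.2 h2) (Real.sqrt_nonneg (m:ℝ)),
      Real.mul_self_sqrt hm0, Real.sqrt_nonneg (m:ℝ)]
  -- apply dominated convergence
  rw [show (nhds (0:ℝ)) = nhds (∫ _, (0:ℝ) ∂P) by simp]
  apply tendsto_integral_filter_of_dominated_convergence (bound := fun _ => C)
  · exact Eventually.of_forall hΦmeas
  · filter_upwards [hev1, hev2, eventually_ge_atTop 1] with m h2 h3 h1
    filter_upwards [hGood] with ω hω
    obtain ⟨hVb, hWb, hWt⟩ := hω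
    have hmpos : (0:ℝ) < m := by exact_mod_cast h1
    have hxB := hBd ω hWb m h1 h2 h3 i
    have hyB := hBd ω hWb m h1 h2 h3 j
    set x : ℝ := (alloc m i ω : ℝ) + r i with hx_def
    set y : ℝ := (alloc m j ω : ℝ) + r j with hy_def
    have hx1 : (m:ℝ)*c/2 ≤ x := le_trans hxB.1 (le_add_of_le_of_nonneg le_rfl (hr i).le)
    have hy1 : (m:ℝ)*c/2 ≤ y := le_trans hyB.1 (le_add_of_le_of_nonneg le_rfl (hr j).le)
    have hri : r i ≤ Rm := le_max_left _ _
    have hrj : r j ≤ Rm := le_max_right _ _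
    have hm1 : (1:ℝ) ≤ m := by exact_mod_cast h1
    have hx2 : x ≤ (m:ℝ) * (1 + Rm) := by
      rw [hx_def]
      nlinarith [hxB.2, hRm, hri]
    have hy2 : y ≤ (m:ℝ) * (1 + Rm) := by
      rw [hy_def]
      nlinarith [hyB.2, hRm, hrj]
    have hxpos : 0 < x := lt_of_lt_of_le (by positivity) hx1
    have hypos : 0 < y := lt_of_lt_of_le (by positivity) hy1
    have hUi := hWb i m
    have hUj := hWb j m
    have hsUi0 : 0 ≤ Real.sqrt ((P[V i|F m]) ω) := Real.sqrt_nonneg _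
    have hsUj0 : 0 ≤ Real.sqrt ((P[V j|F m]) ω) := Real.sqrt_nonneg _
    have hsUi1 : Real.sqrt ((P[V i|F m]) ω) ≤ 1 := Real.sqrt_le_one.2 hUi.2
    have hsUj1 : Real.sqrt ((P[V j|F m]) ω) ≤ 1 := Real.sqrt_le_one.2 hUj.2
    have hnum : (x * Real.sqrt ((P[V j|F m]) ω) - y * Real.sqrt ((P[V i|F m]) ω)) ^ 2
        ≤ (2 * ((m:ℝ) * (1 + Rm))) ^ 2 := by
      apply sq_le_sq'
      · nlinarith [mul_nonneg hxpos.le hsUj0,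
          mul_le_mul_of_nonneg_left hsUi1 hypos.le]
      · nlinarith [mul_nonneg hypos.le hsUi0,
          mul_le_mul_of_nonneg_left hsUj1 hxpos.le]
    have hden : ((m:ℝ)*c/2) * ((m:ℝ)*c/2) ≤ x * y :=
      mul_le_mul hx1 hy1 (by positivity) hxpos.le
    rw [Real.norm_eq_abs, abs_of_nonneg (by positivity)]
    calc (x * Real.sqrt ((P[V j|F m]) ω) - y * Real.sqrt ((P[V i|F m]) ω)) ^ 2 / (x * y)
        ≤ (2 * ((m:ℝ) * (1 + Rm))) ^ 2 / (((m:ℝ)*c/2) * ((m:ℝ)*c/2)) :=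
          div_le_div₀ (by positivity) hnum (by positivity) hden
    _ = C := by
      rw [hC_def]
      field_simp
      ring
  · exact integrable_const C
  · filter_upwards [hGood] with ω hω
    obtain ⟨hVb, hWb, hWt⟩ := hω
    set S : ℝ := ∑ l, Real.sqrt (V l ω) with hS_def
    have hS : 0 < S := Finset.sum_pos
      (fun l _ => Real.sqrt_pos.2 (lt_of_lt_of_le hε (hVb l).1)) univ_nonempty
    have hfi : 0 < Real.sqrt (V i ω) / S :=
      div_pos (Real.sqrt_pos.2 (lt_of_lt_of_le hε (hVb i).1)) hS
    have hfj : 0 < Real.sqrt (V j ω) / S :=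
      div_pos (Real.sqrt_pos.2 (lt_of_lt_of_le hε (hVb j).1)) hS
    have hai : Tendsto (fun m : ℕ => ((alloc m i ω : ℝ) + r i) / m) atTop
        (nhds (Real.sqrt (V i ω) / S)) := by
      have h0 := tendsto_const_div_atTop_nhds_zero_nat (r i)
      have := (hPt ω hVb hWt i).add h0
      rw [add_zero] at this
      exact this.congr (fun m => (add_div _ _ _).symm)
    have haj : Tendsto (fun m : ℕ => ((alloc m j ω : ℝ) + r j) / m) atTop
        (nhds (Real.sqrt (V j ω) / S)) := by
      have h0 := tendsto_const_div_atTop_nhds_zero_nat (r j)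
      have := (hPt ω hVb hWt j).add h0
      rw [add_zero] at this
      exact this.congr (fun m => (add_div _ _ _).symm)
    exact aux_pointwise (fun m => (alloc m i ω : ℝ) + r i)
      (fun m => (alloc m j ω : ℝ) + r j)
      (fun m => (P[V i|F m]) ω) (fun m => (P[V j|F m]) ω)
      (Real.sqrt (V i ω) / S) (Real.sqrt (V j ω) / S) (V i ω) (V j ω)
      hfi hfj hai haj (hWt i) (hWt j) (by ring)
end

section
/- Let (Ω, F, P) be a probability space with a filtration (F_L)_{L∈ℕ}, and let Z_1, ..., Z_n be random variables measurable with respect to F_∞ = ∨_L F_L, with 0 < Z_i ≤ 1 almost surely for each i. Let B_1, ..., B_n > 0 be constants. For m ∈ ℕ set L(m) = ⌊√m⌋ and w_i^{(m)} = E[Z_i | F_{L(m)}]; define m_i(m) = max{ L(m), ⌊ m·√(B_i w_i^{(m)}) / ∑_{k=1}^n √(B_k w_k^{(m)}) ⌋ } for i = 1, ..., n−1, and m_n(m) = m − ∑_{i=1}^{n−1} m_i(m). Then for every i ∈ {1, ..., n}, m_i(m)/m → √(B_i Z_i) / ∑_{k=1}^n √(B_k Z_k) almost surely as m → ∞. 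-/
open MeasureTheory ProbabilityTheory Filter Finset Topology

lemma aux_natSqrt_atTop : Tendsto Nat.sqrt atTop atTop :=
  tendsto_atTop_atTop.2 fun b => ⟨b * b, fun m hm => Nat.le_sqrt.2 hm⟩

lemma aux_sqrt_div : Tendsto (fun m : ℕ => (Nat.sqrt m : ℝ) / m) atTop (𝓝 0) := by
  have h1 : Tendsto (fun m : ℕ => 1 / (Nat.sqrt m : ℝ)) atTop (𝓝 0) :=
    tendsto_one_div_atTop_nhds_zero_nat.comp aux_natSqrt_atTop
  apply tendsto_of_tendsto_of_tendsto_of_le_of_le' tendsto_const_nhds h1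
  · filter_upwards with m; positivity
  · filter_upwards [eventually_ge_atTop 1] with m hm
    have hm0 : (0:ℝ) < m := by exact_mod_cast hm
    have hs1 : 1 ≤ Nat.sqrt m := Nat.le_sqrt.2 (by simpa using hm)
    have hs0 : (0:ℝ) < (Nat.sqrt m : ℝ) := by exact_mod_cast hs1
    rw [div_le_div_iff₀ hm0 hs0]
    nlinarith [(show ((Nat.sqrt m : ℝ))^2 ≤ m by exact_mod_cast Nat.sqrt_le' m)]

lemma aux_floor_div {r : ℕ → ℝ} {s : ℝ} (hr : Tendsto r atTop (𝓝 s)) :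
    Tendsto (fun m : ℕ => (⌊(m:ℝ) * r m⌋ : ℝ) / m) atTop (𝓝 s) := by
  have hlow : Tendsto (fun m : ℕ => r m - 1 / m) atTop (𝓝 s) := by
    simpa using hr.sub tendsto_one_div_atTop_nhds_zero_nat
  apply tendsto_of_tendsto_of_tendsto_of_le_of_le' hlow hr
  · filter_upwards [eventually_ge_atTop 1] with m hm
    have hm0 : (0:ℝ) < m := by exact_mod_cast hm
    rw [sub_le_iff_le_add, ← add_div, le_div_iff₀ hm0]
    nlinarith [Int.sub_one_lt_floor ((m:ℝ) * r m)]
  · filter_upwards [eventually_ge_atTop 1] with m hm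
    have hm0 : (0:ℝ) < m := by exact_mod_cast hm
    rw [div_le_iff₀ hm0]
    calc ((⌊(m:ℝ) * r m⌋ : ℝ)) ≤ (m:ℝ) * r m := Int.floor_le _
      _ = r m * m := mul_comm _ _

/-- Lemma 4.2.1: in the hybrid design for a parallel-series system, the subsystem sample
sizes satisfy `m i (m) / m → √(B i · Z i) / ∑ √(B k · Z k)` almost surely. -/
theorem hybrid_allocation_as {Ω : Type*} {mΩ : MeasurableSpace Ω} (P : Measure Ω)
    [IsProbabilityMeasure P] (F : ℕ → MeasurableSpace Ω)
    (hFmono : Monotone F) (hFle : ∀ L, F L ≤ mΩ)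
    (n : ℕ) (Z : Fin (n + 1) → Ω → ℝ)
    (hZmeas : ∀ i, Measurable[⨆ L, F L] (Z i))
    (hZ : ∀ i, ∀ᵐ ω ∂P, Z i ω ∈ Set.Ioc (0 : ℝ) 1)
    (B : Fin (n + 1) → ℝ) (hB : ∀ i, 0 < B i)
    (alloc : ℕ → Fin (n + 1) → Ω → ℤ)
    (hAlloc : ∀ m (ω : Ω) (i : Fin (n + 1)), (i : ℕ) < n →
      alloc m i ω = max (Nat.sqrt m : ℤ)
        ⌊(m : ℝ) * Real.sqrt (B i * (P[Z i | F (Nat.sqrt m)]) ω) /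
          ∑ k, Real.sqrt (B k * (P[Z k | F (Nat.sqrt m)]) ω)⌋)
    (hAllocLast : ∀ m (ω : Ω),
      alloc m (Fin.last n) ω =
        (m : ℤ) - ∑ i ∈ Finset.univ.filter (fun i : Fin (n + 1) => (i : ℕ) < n),
          alloc m i ω) :
    ∀ i, ∀ᵐ ω ∂P, Tendsto (fun m => (alloc m i ω : ℝ) / m) atTop
      (nhds (Real.sqrt (B i * Z i ω) / ∑ k, Real.sqrt (B k * Z k ω))) := by
  set ℱ : Filtration ℕ mΩ := ⟨F, hFmono, hFle⟩ with hℱdef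
  -- integrability of each Z i
  have hZint : ∀ i, Integrable (Z i) P := by
    intro i
    refine (integrable_const (1:ℝ)).mono'
      ((hZmeas i).mono (iSup_le hFle) le_rfl).aestronglyMeasurable ?_
    filter_upwards [hZ i] with ω hω
    rw [Real.norm_eq_abs, abs_of_pos hω.1]; exact hω.2
  -- Lévy upward convergence for each i
  have hconv : ∀ᵐ ω ∂P, ∀ i, Tendsto (fun L => (P[Z i | F L]) ω) atTop (𝓝 (Z i ω)) := by
    rw [ae_all_iff]
    intro i
    have hsm : StronglyMeasurable[⨆ L, ℱ L] (Z i) := (hZmeas i).stronglyMeasurable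
    exact (hZint i).tendsto_ae_condExp hsm
  have hZpos : ∀ᵐ ω ∂P, ∀ i, Z i ω ∈ Set.Ioc (0:ℝ) 1 := ae_all_iff.2 hZ
  -- the pointwise argument
  have main : ∀ᵐ ω ∂P, ∀ i, Tendsto (fun m => (alloc m i ω : ℝ) / m) atTop
      (𝓝 (Real.sqrt (B i * Z i ω) / ∑ k, Real.sqrt (B k * Z k ω))) := by
    filter_upwards [hconv, hZpos] with ω hc hp
    set S : ℝ := ∑ k, Real.sqrt (B k * Z k ω) with hSdef
    have hS : 0 < S := Finset.sum_pos
      (fun k _ => Real.sqrt_pos.2 (mul_pos (hB k) (hp k).1)) ⟨0, mem_univ 0⟩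
    have hw : ∀ i, Tendsto (fun m => (P[Z i | F (Nat.sqrt m)]) ω) atTop (𝓝 (Z i ω)) :=
      fun i => (hc i).comp aux_natSqrt_atTop
    have hterm : ∀ k, Tendsto (fun m => Real.sqrt (B k * (P[Z k | F (Nat.sqrt m)]) ω))
        atTop (𝓝 (Real.sqrt (B k * Z k ω))) :=
      fun k => (((hw k).const_mul (B k))).sqrt
    have hden : Tendsto (fun m => ∑ k, Real.sqrt (B k * (P[Z k | F (Nat.sqrt m)]) ω))
        atTop (𝓝 S) := tendsto_finset_sum _ fun k _ => hterm k
    have hratio : ∀ i, Tendsto (fun m =>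
        Real.sqrt (B i * (P[Z i | F (Nat.sqrt m)]) ω) /
          ∑ k, Real.sqrt (B k * (P[Z k | F (Nat.sqrt m)]) ω)) atTop
        (𝓝 (Real.sqrt (B i * Z i ω) / S)) :=
      fun i => (hterm i).div hden hS.ne'
    -- case i < n
    have key : ∀ i : Fin (n+1), (i:ℕ) < n →
        Tendsto (fun m => (alloc m i ω : ℝ) / m) atTop
          (𝓝 (Real.sqrt (B i * Z i ω) / S)) := by
      intro i hi
      have hmax := aux_sqrt_div.max (aux_floor_div (hratio i))
      rw [max_eq_right (by positivity)] at hmax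
      refine hmax.congr' ?_
      filter_upwards [eventually_ge_atTop 1] with m hm
      have hm0 : (0:ℝ) ≤ m := by positivity
      rw [hAlloc m ω i hi]
      push_cast
      rw [max_div_div_right hm0, mul_div_assoc]
    intro i
    by_cases hi : (i:ℕ) < n
    · exact key i hi
    · have hieq : i = Fin.last n := Fin.ext (by have := i.isLt; simp [Fin.val_last]; omega)
      subst hieq
      -- sum over the other indices
      have hfe : Finset.univ.filter (fun i : Fin (n + 1) => (i : ℕ) < n)
          = Finset.univ.erase (Fin.last n) := by
        ext j
        have := j.isLt
        simp [Finset.mem_erase, Fin.ext_iff, Fin.val_last]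
        omega
      have hsum : ∑ i ∈ Finset.univ.filter (fun i : Fin (n + 1) => (i : ℕ) < n),
          (Real.sqrt (B i * Z i ω) / S) = (S - Real.sqrt (B (Fin.last n) * Z (Fin.last n) ω)) / S := by
        rw [hfe, ← Finset.sum_div]
        congr 1
        have := Finset.sum_erase_add Finset.univ
          (fun k => Real.sqrt (B k * Z k ω)) (mem_univ (Fin.last n))
        linarith [this]
      have htend : Tendsto (fun m => 1 - ∑ i ∈ Finset.univ.filter
            (fun i : Fin (n + 1) => (i : ℕ) < n), (alloc m i ω : ℝ) / m) atTop
          (𝓝 (1 - (S - Real.sqrt (B (Fin.last n) * Z (Fin.last n) ω)) / S)) := by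
        rw [← hsum]
        exact tendsto_const_nhds.sub
          (tendsto_finset_sum _ fun j hj => key j (by simpa using (Finset.mem_filter.1 hj).2))
      have hlim : 1 - (S - Real.sqrt (B (Fin.last n) * Z (Fin.last n) ω)) / S
          = Real.sqrt (B (Fin.last n) * Z (Fin.last n) ω) / S := by
        field_simp
        ring
      rw [hlim] at htend
      refine htend.congr' ?_
      filter_upwards [eventually_ge_atTop 1] with m hm
      have hm0 : (m:ℝ) ≠ 0 := by positivity
      rw [hAllocLast m ω]
      push_cast
      rw [sub_div, Finset.sum_div, div_self hm0]
  intro i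
  filter_upwards [main] with ω h using h i
end
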